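/- Let y_1, …, y_m be nonnegative real numbers and let B_1, …, B_p be a partition of {1, …, m} into p nonempty blocks. Set x_b = ∑_{i∈B_b} y_i for b = 1, …, p and x_b = 0 for b = p+1, …, m. Then ∑_{b=1}^m x_b = ∑_{i=1}^m y_i, and for every t ∈ {1, …, m} the sum of the t largest values among x_1, …, x_m is at least the sum of the t largest values among y_1, …, y_m. -/

import Mathlib

/-- Majorization property of block sums: if `x` is obtained from a nonnegative list `y`
by summing over the blocks of a partition (padded with zeros), then `x` and `y` have the
same total sum and, for every `t`, the sum of the `t` largest entries of `x` (i.e. the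
maximum of `∑_{i ∈ A} x i` over subsets `A` of cardinality `t`) is at least that of `y`. -/
theorem stmt_1 (m p : ℕ) (hp : 0 < p) (hpm : p ≤ m)
    (y : Fin m → ℝ) (hy : ∀ i, 0 ≤ y i)
    (B : Fin p → Finset (Fin m))
    (hne : ∀ b, (B b).Nonempty)
    (hdisj : ∀ b₁ b₂, b₁ ≠ b₂ → Disjoint (B b₁) (B b₂))
    (hcover : ∀ i : Fin m, ∃ b, i ∈ B b)
    (x : Fin m → ℝ)
    (hx : ∀ b : Fin m, x b = if h : (b : ℕ) < p then ∑ i ∈ B ⟨b, h⟩, y i else 0) :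
    (∑ b, x b = ∑ i, y i) ∧
    ∀ t : ℕ, 1 ≤ t → t ≤ m →
      ∀ h : ((Finset.univ : Finset (Fin m)).powersetCard t).Nonempty,
      ((Finset.univ : Finset (Fin m)).powersetCard t).sup' h (fun A => ∑ i ∈ A, y i) ≤
      ((Finset.univ : Finset (Fin m)).powersetCard t).sup' h (fun A => ∑ i ∈ A, x i) := by
  -- basic facts
  have hxnonneg : ∀ b, 0 ≤ x b := by
    intro b
    rw [hx b]
    split
    · exact Finset.sum_nonneg fun i _ => hy i
    · exact le_refl 0
  have hxcast : ∀ b : Fin p, x (Fin.castLE hpm b) = ∑ i ∈ B b, y i := by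
    intro b
    rw [hx]
    exact dif_pos (by simp)
  choose bmap hbmap using hcover
  -- sum over image of a finset of blocks equals sum over biUnion
  have key : ∀ S : Finset (Fin p),
      ∑ b ∈ S.image (Fin.castLE hpm), x b = ∑ i ∈ S.biUnion B, y i := by
    intro S
    rw [Finset.sum_image (fun a _ b _ h => Fin.castLE_injective hpm h)]
    rw [Finset.sum_biUnion (fun b₁ h₁ b₂ h₂ h => hdisj b₁ b₂ h)]
    exact Finset.sum_congr rfl fun b _ => hxcast b
  constructor
  · -- total sum
    have h1 : ∑ b, x b = ∑ b ∈ (Finset.univ : Finset (Fin p)).image (Fin.castLE hpm), x b := by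
      symm
      apply Finset.sum_subset (Finset.subset_univ _)
      intro b _ hb
      rw [hx]
      rw [dif_neg]
      intro hlt
      exact hb (Finset.mem_image.mpr ⟨⟨b, hlt⟩, Finset.mem_univ _, by ext; simp⟩)
    rw [h1, key]
    apply Finset.sum_subset (Finset.subset_univ _)
    intro i _ hi
    exact absurd (Finset.mem_biUnion.mpr ⟨bmap i, Finset.mem_univ _, hbmap i⟩) hi
  · intro t ht1 htm h
    apply Finset.sup'_le
    intro A hA
    have hAcard : A.card = t := (Finset.mem_powersetCard.mp hA).2
    -- the blocks touched by A
    set S : Finset (Fin p) := A.image bmap with hS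
    set A' : Finset (Fin m) := S.image (Fin.castLE hpm) with hA'
    have hcard : A'.card ≤ t := by
      calc A'.card ≤ S.card := Finset.card_image_le
        _ ≤ A.card := Finset.card_image_le
        _ = t := hAcard
    obtain ⟨A'', hsub, _, hcard''⟩ := Finset.exists_subsuperset_card_eq
      (A'.subset_univ) hcard (by simpa using htm)
    have h1 : ∑ i ∈ A, y i ≤ ∑ i ∈ S.biUnion B, y i := by
      apply Finset.sum_le_sum_of_subset_of_nonneg
      · intro i hi
        exact Finset.mem_biUnion.mpr ⟨bmap i, Finset.mem_image_of_mem _ hi, hbmap i⟩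
      · intro i _ _; exact hy i
    have h2 : ∑ i ∈ S.biUnion B, y i ≤ ∑ b ∈ A'', x b := by
      rw [← key S]
      exact Finset.sum_le_sum_of_subset_of_nonneg hsub fun b _ _ => hxnonneg b
    calc ∑ i ∈ A, y i ≤ ∑ b ∈ A'', x b := le_trans h1 h2
      _ ≤ _ := Finset.le_sup' (fun A => ∑ i ∈ A, x i) (Finset.mem_powersetCard.mpr ⟨Finset.subset_univ _, hcard''⟩)
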